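/- Let C and C' be globularily generated double categories and let G, G' : C → C' be double functors. If the decorated horizontalizations H*G and H*G' of G and G' are equal, then for every positive integer k the k-th horizontal functions H_k^G and H_k^{G'} (the restrictions of the morphism functions of G1 and G1' to H_k^C) are equal, and the k-th vertical functors V_k^G and V_k^{G'} (the restrictions of G1 and G1' to V_k^C) are equal. -/

import Mathlib

universe u

/-! Basic raw categories and functors. -/


structure CatData : Type (u + 1) where
  Obj : Type u
  Hom : Obj → Obj → Type u
  id : (a : Obj) → Hom a a
  comp : {a b c : Obj} → Hom a b → Hom b c → Hom a c
  id_comp : ∀ {a b : Obj} (f : Hom a b), comp (id a) f = f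
  comp_id : ∀ {a b : Obj} (f : Hom a b), comp f (id b) = f
  assoc : ∀ {a b c d : Obj} (f : Hom a b) (g : Hom b c) (h : Hom c d),
    comp (comp f g) h = comp f (comp g h)

namespace CatData

/-- The canonical morphism associated to an equality of objects. -/
def eqHom (C : CatData.{u}) {a b : C.Obj} (h : a = b) : C.Hom a b := h ▸ C.id a

/-- Conjugation of a morphism by equalities of objects. -/
def conj (C : CatData.{u}) {a a' b b' : C.Obj} (h1 : a' = a) (h2 : b = b')
    (f : C.Hom a b) : C.Hom a' b' :=
  C.comp (C.eqHom h1) (C.comp f (C.eqHom h2))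

@[simp] theorem eqHom_refl (C : CatData.{u}) (a : C.Obj) : C.eqHom (rfl : a = a) = C.id a := rfl

@[simp] theorem eqHom_trans (C : CatData.{u}) {a b c : C.Obj} (h : a = b) (h' : b = c) :
    C.comp (C.eqHom h) (C.eqHom h') = C.eqHom (h.trans h') := by
  subst h; subst h'; exact C.id_comp _

@[simp] theorem conj_rfl (C : CatData.{u}) {a b : C.Obj} (f : C.Hom a b) :
    C.conj rfl rfl f = f := by
  show C.comp (C.id a) (C.comp f (C.id b)) = f
  rw [C.comp_id, C.id_comp]

theorem eqHom_conj (C : CatData.{u}) {a a' b b' : C.Obj} (h1 : a' = a) (h2 : b = b')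
    (h : a = b) : C.conj h1 h2 (C.eqHom h) = C.eqHom ((h1.trans h).trans h2) := by
  subst h1; subst h2; subst h
  exact C.conj_rfl _

end CatData

structure Fctr (C D : CatData.{u}) where
  obj : C.Obj → D.Obj
  map : {a b : C.Obj} → C.Hom a b → D.Hom (obj a) (obj b)
  map_id : ∀ a : C.Obj, map (C.id a) = D.id (obj a)
  map_comp : ∀ {a b c : C.Obj} (f : C.Hom a b) (g : C.Hom b c),
    map (C.comp f g) = D.comp (map f) (map g)

namespace Fctr

def idF (C : CatData.{u}) : Fctr C C where
  obj := fun a => a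
  map := fun f => f
  map_id := fun _ => rfl
  map_comp := fun _ _ => rfl

def compF {C D E : CatData.{u}} (F : Fctr C D) (G : Fctr D E) : Fctr C E where
  obj := fun a => G.obj (F.obj a)
  map := fun f => G.map (F.map f)
  map_id := fun a => by
    show G.map (F.map (C.id a)) = E.id (G.obj (F.obj a))
    rw [F.map_id, G.map_id]
  map_comp := fun f g => by
    show G.map (F.map (C.comp f g)) = E.comp (G.map (F.map f)) (G.map (F.map g))
    rw [F.map_comp, G.map_comp]

theorem map_eqHom {C D : CatData.{u}} (F : Fctr C D) {a b : C.Obj} (h : a = b) :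
    F.map (C.eqHom h) = D.eqHom (congrArg F.obj h) := by
  subst h; simpa using F.map_id a

end Fctr

/-! Pseudo double categories.

A (pseudo) double category is given by a category `C0` of objects and vertical
morphisms, a category `C1` of horizontal morphisms and 2-morphisms, source, target
and horizontal identity functors, a horizontal composition (given on objects of `C1`
for composable pairs, and on morphisms of `C1` for compatible pairs of 2-morphisms),
together with globular left/right identity and associativity isomorphisms. -/

structure DblCat : Type (u + 1) where
  C0 : CatData.{u}
  C1 : CatData.{u}
  s : Fctr C1 C0
  t : Fctr C1 C0
  i : Fctr C0 C1
  i_s_obj : ∀ a : C0.Obj, s.obj (i.obj a) = a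
  i_t_obj : ∀ a : C0.Obj, t.obj (i.obj a) = a
  i_s_map : ∀ {a b : C0.Obj} (u : C0.Hom a b),
    s.map (i.map u) = C0.conj (i_s_obj a) (i_s_obj b).symm u
  i_t_map : ∀ {a b : C0.Obj} (u : C0.Hom a b),
    t.map (i.map u) = C0.conj (i_t_obj a) (i_t_obj b).symm u
  hObj : (f g : C1.Obj) → t.obj f = s.obj g → C1.Obj
  hObj_s : ∀ (f g : C1.Obj) (w : t.obj f = s.obj g), s.obj (hObj f g w) = s.obj f
  hObj_t : ∀ (f g : C1.Obj) (w : t.obj f = s.obj g), t.obj (hObj f g w) = t.obj g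
  hMap : {f f' g g' : C1.Obj} → (w : t.obj f = s.obj g) → (w' : t.obj f' = s.obj g') →
    (Φ : C1.Hom f f') → (Ψ : C1.Hom g g') →
    C0.comp (t.map Φ) (C0.eqHom w') = C0.comp (C0.eqHom w) (s.map Ψ) →
    C1.Hom (hObj f g w) (hObj f' g' w')
  hMap_id : ∀ {f g : C1.Obj} (w : t.obj f = s.obj g) (pf : _),
    hMap w w (C1.id f) (C1.id g) pf = C1.id (hObj f g w)
  hMap_comp : ∀ {f f' f'' g g' g'' : C1.Obj}
    (w : t.obj f = s.obj g) (w' : t.obj f' = s.obj g') (w'' : t.obj f'' = s.obj g'')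
    (Φ : C1.Hom f f') (Φ' : C1.Hom f' f'') (Ψ : C1.Hom g g') (Ψ' : C1.Hom g' g'')
    (pf : _) (pf' : _) (pf'' : _),
    hMap w w'' (C1.comp Φ Φ') (C1.comp Ψ Ψ') pf'' =
      C1.comp (hMap w w' Φ Ψ pf) (hMap w' w'' Φ' Ψ' pf')
  hMap_s : ∀ {f f' g g' : C1.Obj} (w : t.obj f = s.obj g) (w' : t.obj f' = s.obj g')
    (Φ : C1.Hom f f') (Ψ : C1.Hom g g') (pf : _),
    s.map (hMap w w' Φ Ψ pf) = C0.conj (hObj_s f g w) (hObj_s f' g' w').symm (s.map Φ)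
  hMap_t : ∀ {f f' g g' : C1.Obj} (w : t.obj f = s.obj g) (w' : t.obj f' = s.obj g')
    (Φ : C1.Hom f f') (Ψ : C1.Hom g g') (pf : _),
    t.map (hMap w w' Φ Ψ pf) = C0.conj (hObj_t f g w) (hObj_t f' g' w').symm (t.map Ψ)
  lunit : (f : C1.Obj) → C1.Hom (hObj (i.obj (s.obj f)) f (i_t_obj (s.obj f))) f
  lunitInv : (f : C1.Obj) → C1.Hom f (hObj (i.obj (s.obj f)) f (i_t_obj (s.obj f)))
  lunit_iso₁ : ∀ f : C1.Obj, C1.comp (lunit f) (lunitInv f) = C1.id _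
  lunit_iso₂ : ∀ f : C1.Obj, C1.comp (lunitInv f) (lunit f) = C1.id _
  lunit_s : ∀ f : C1.Obj, ∃ h, s.map (lunit f) = C0.eqHom h
  lunit_t : ∀ f : C1.Obj, ∃ h, t.map (lunit f) = C0.eqHom h
  lunitInv_s : ∀ f : C1.Obj, ∃ h, s.map (lunitInv f) = C0.eqHom h
  lunitInv_t : ∀ f : C1.Obj, ∃ h, t.map (lunitInv f) = C0.eqHom h
  runit : (f : C1.Obj) → C1.Hom (hObj f (i.obj (t.obj f)) (i_s_obj (t.obj f)).symm) f
  runitInv : (f : C1.Obj) → C1.Hom f (hObj f (i.obj (t.obj f)) (i_s_obj (t.obj f)).symm)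
  runit_iso₁ : ∀ f : C1.Obj, C1.comp (runit f) (runitInv f) = C1.id _
  runit_iso₂ : ∀ f : C1.Obj, C1.comp (runitInv f) (runit f) = C1.id _
  runit_s : ∀ f : C1.Obj, ∃ h, s.map (runit f) = C0.eqHom h
  runit_t : ∀ f : C1.Obj, ∃ h, t.map (runit f) = C0.eqHom h
  runitInv_s : ∀ f : C1.Obj, ∃ h, s.map (runitInv f) = C0.eqHom h
  runitInv_t : ∀ f : C1.Obj, ∃ h, t.map (runitInv f) = C0.eqHom h
  assocC : {f g h : C1.Obj} → (w1 : t.obj f = s.obj g) → (w2 : t.obj g = s.obj h) →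
    C1.Hom (hObj (hObj f g w1) h ((hObj_t f g w1).trans w2))
      (hObj f (hObj g h w2) (w1.trans (hObj_s g h w2).symm))
  assocCInv : {f g h : C1.Obj} → (w1 : t.obj f = s.obj g) → (w2 : t.obj g = s.obj h) →
    C1.Hom (hObj f (hObj g h w2) (w1.trans (hObj_s g h w2).symm))
      (hObj (hObj f g w1) h ((hObj_t f g w1).trans w2))
  assoc_iso₁ : ∀ {f g h : C1.Obj} (w1 : t.obj f = s.obj g) (w2 : t.obj g = s.obj h),
    C1.comp (assocC w1 w2) (assocCInv w1 w2) = C1.id _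
  assoc_iso₂ : ∀ {f g h : C1.Obj} (w1 : t.obj f = s.obj g) (w2 : t.obj g = s.obj h),
    C1.comp (assocCInv w1 w2) (assocC w1 w2) = C1.id _
  assoc_s : ∀ {f g h : C1.Obj} (w1 : t.obj f = s.obj g) (w2 : t.obj g = s.obj h),
    ∃ hh, s.map (assocC w1 w2) = C0.eqHom hh
  assoc_t : ∀ {f g h : C1.Obj} (w1 : t.obj f = s.obj g) (w2 : t.obj g = s.obj h),
    ∃ hh, t.map (assocC w1 w2) = C0.eqHom hh
  assocInv_s : ∀ {f g h : C1.Obj} (w1 : t.obj f = s.obj g) (w2 : t.obj g = s.obj h),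
    ∃ hh, s.map (assocCInv w1 w2) = C0.eqHom hh
  assocInv_t : ∀ {f g h : C1.Obj} (w1 : t.obj f = s.obj g) (w2 : t.obj g = s.obj h),
    ∃ hh, t.map (assocCInv w1 w2) = C0.eqHom hh

namespace DblCat

/-- A 2-morphism is globular if its source and target are vertical identities. -/
def Globular (D : DblCat.{u}) {f g : D.C1.Obj} (Φ : D.C1.Hom f g) : Prop :=
  (∃ h, D.s.map Φ = D.C0.eqHom h) ∧ (∃ h, D.t.map Φ = D.C0.eqHom h)

/-- A 2-morphism is the horizontal identity of some vertical morphism. -/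
def IsHId (D : DblCat.{u}) {f g : D.C1.Obj} (Φ : D.C1.Hom f g) : Prop :=
  ∃ (a b : D.C0.Obj) (u : D.C0.Hom a b),
    f = D.i.obj a ∧ g = D.i.obj b ∧ HEq Φ (D.i.map u)

end DblCat

/-! Sub-double categories, globular generation, and the vertical/horizontal filtrations. -/

structure SubCat (C : CatData.{u}) where
  objs : Set C.Obj
  homs : ∀ ⦃a b : C.Obj⦄, C.Hom a b → Prop
  src_mem : ∀ {a b : C.Obj} {f : C.Hom a b}, homs f → a ∈ objs
  tgt_mem : ∀ {a b : C.Obj} {f : C.Hom a b}, homs f → b ∈ objs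
  id_mem : ∀ {a : C.Obj}, a ∈ objs → homs (C.id a)
  comp_mem : ∀ {a b c : C.Obj} {f : C.Hom a b} {g : C.Hom b c},
    homs f → homs g → homs (C.comp f g)

structure SubDbl (D : DblCat.{u}) where
  S0 : SubCat D.C0
  S1 : SubCat D.C1
  s_obj_mem : ∀ {f : D.C1.Obj}, f ∈ S1.objs → D.s.obj f ∈ S0.objs
  t_obj_mem : ∀ {f : D.C1.Obj}, f ∈ S1.objs → D.t.obj f ∈ S0.objs
  s_map_mem : ∀ {f g : D.C1.Obj} {Φ : D.C1.Hom f g}, S1.homs Φ → S0.homs (D.s.map Φ)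
  t_map_mem : ∀ {f g : D.C1.Obj} {Φ : D.C1.Hom f g}, S1.homs Φ → S0.homs (D.t.map Φ)
  i_obj_mem : ∀ {a : D.C0.Obj}, a ∈ S0.objs → D.i.obj a ∈ S1.objs
  i_map_mem : ∀ {a b : D.C0.Obj} {u : D.C0.Hom a b}, S0.homs u → S1.homs (D.i.map u)
  hObj_mem : ∀ {f g : D.C1.Obj} (w : D.t.obj f = D.s.obj g),
    f ∈ S1.objs → g ∈ S1.objs → D.hObj f g w ∈ S1.objs
  hMap_mem : ∀ {f f' g g' : D.C1.Obj} (w : D.t.obj f = D.s.obj g)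
    (w' : D.t.obj f' = D.s.obj g') (Φ : D.C1.Hom f f') (Ψ : D.C1.Hom g g') (pf : _),
    S1.homs Φ → S1.homs Ψ → S1.homs (D.hMap w w' Φ Ψ pf)
  lunit_mem : ∀ {f : D.C1.Obj}, f ∈ S1.objs → S1.homs (D.lunit f) ∧ S1.homs (D.lunitInv f)
  runit_mem : ∀ {f : D.C1.Obj}, f ∈ S1.objs → S1.homs (D.runit f) ∧ S1.homs (D.runitInv f)
  assoc_mem : ∀ {f g h : D.C1.Obj} (w1 : D.t.obj f = D.s.obj g) (w2 : D.t.obj g = D.s.obj h),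
    f ∈ S1.objs → g ∈ S1.objs → h ∈ S1.objs →
    S1.homs (D.assocC w1 w2) ∧ S1.homs (D.assocCInv w1 w2)

/-- A double category is globularily generated if the only sub-double category of it
containing all of its globular 2-morphisms is the double category itself. -/
def DblCat.GloballyGenerated (D : DblCat.{u}) : Prop :=
  ∀ S : SubDbl D,
    (∀ {f g : D.C1.Obj} (Φ : D.C1.Hom f g), D.Globular Φ → S.S1.homs Φ) →
    ((∀ a : D.C0.Obj, a ∈ S.S0.objs) ∧ (∀ {a b : D.C0.Obj} (u : D.C0.Hom a b), S.S0.homs u) ∧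
      (∀ f : D.C1.Obj, f ∈ S.S1.objs) ∧ (∀ {f g : D.C1.Obj} (Φ : D.C1.Hom f g), S.S1.homs Φ))

/-- The subcategory (closure) generated by a collection of morphisms. -/
inductive catClos (C : CatData.{u}) (S : ∀ ⦃a b : C.Obj⦄, C.Hom a b → Prop) :
    ∀ ⦃a b : C.Obj⦄, C.Hom a b → Prop
  | base {a b : C.Obj} {f : C.Hom a b} : S f → catClos C S f
  | id (a : C.Obj) : catClos C S (C.id a)
  | comp {a b c : C.Obj} {f : C.Hom a b} {g : C.Hom b c} :
      catClos C S f → catClos C S g → catClos C S (C.comp f g)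

/-- Closure of a collection of 2-morphisms under horizontal composition. -/
inductive horClos (D : DblCat.{u}) (S : ∀ ⦃f g : D.C1.Obj⦄, D.C1.Hom f g → Prop) :
    ∀ ⦃f g : D.C1.Obj⦄, D.C1.Hom f g → Prop
  | base {f g : D.C1.Obj} {Φ : D.C1.Hom f g} : S Φ → horClos D S Φ
  | hcomp {f f' g g' : D.C1.Obj} (w : D.t.obj f = D.s.obj g) (w' : D.t.obj f' = D.s.obj g')
      (Φ : D.C1.Hom f f') (Ψ : D.C1.Hom g g') (pf : _) :
      horClos D S Φ → horClos D S Ψ → horClos D S (D.hMap w w' Φ Ψ pf)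

/-- The horizontal filtration of a double category: `Hfil D k` is the collection
`H_{k+1}` of the paper; `Hfil D 0 = H₁` is the union of the globular 2-morphisms and
the horizontal identities of vertical morphisms, and `H_{k+1}` consists of the
horizontal composites of 2-morphisms of `V_k`. -/
def DblCat.Hfil (D : DblCat.{u}) : ℕ → ∀ ⦃f g : D.C1.Obj⦄, D.C1.Hom f g → Prop
  | 0 => fun _ _ Φ => D.Globular Φ ∨ D.IsHId Φ
  | k + 1 => horClos D (catClos D.C1 (D.Hfil k))

/-- The vertical filtration of a double category: `Vfil D k` is the collection of
morphisms of the subcategory `V_{k+1}` of `C1` generated by `H_{k+1}`. -/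
def DblCat.Vfil (D : DblCat.{u}) (k : ℕ) : ∀ ⦃f g : D.C1.Obj⦄, D.C1.Hom f g → Prop :=
  catClos D.C1 (D.Hfil k)

/-- Strictness of a double category: horizontal composition is strictly unital and
associative and the unitors and associator are identities. -/
structure DblCat.IsStrict (D : DblCat.{u}) : Prop where
  hObj_idl : ∀ f : D.C1.Obj, D.hObj (D.i.obj (D.s.obj f)) f (D.i_t_obj (D.s.obj f)) = f
  hObj_idr : ∀ f : D.C1.Obj, D.hObj f (D.i.obj (D.t.obj f)) (D.i_s_obj (D.t.obj f)).symm = f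
  hObj_assoc : ∀ {f g h : D.C1.Obj} (w1 : D.t.obj f = D.s.obj g) (w2 : D.t.obj g = D.s.obj h),
    D.hObj (D.hObj f g w1) h ((D.hObj_t f g w1).trans w2) =
      D.hObj f (D.hObj g h w2) (w1.trans ((D.hObj_s g h w2)).symm)
  lunit_eq : ∀ f : D.C1.Obj, D.lunit f = D.C1.eqHom (hObj_idl f)
  runit_eq : ∀ f : D.C1.Obj, D.runit f = D.C1.eqHom (hObj_idr f)
  assoc_eq : ∀ {f g h : D.C1.Obj} (w1 : D.t.obj f = D.s.obj g) (w2 : D.t.obj g = D.s.obj h),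
    D.assocC w1 w2 = D.C1.eqHom (hObj_assoc w1 w2)

/-! Double functors. -/

structure DblFctr (C D : DblCat.{u}) where
  F0 : Fctr C.C0 D.C0
  F1 : Fctr C.C1 D.C1
  s_obj : ∀ f : C.C1.Obj, D.s.obj (F1.obj f) = F0.obj (C.s.obj f)
  t_obj : ∀ f : C.C1.Obj, D.t.obj (F1.obj f) = F0.obj (C.t.obj f)
  s_map : ∀ {f g : C.C1.Obj} (Φ : C.C1.Hom f g),
    D.s.map (F1.map Φ) = D.C0.conj (s_obj f) (s_obj g).symm (F0.map (C.s.map Φ))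
  t_map : ∀ {f g : C.C1.Obj} (Φ : C.C1.Hom f g),
    D.t.map (F1.map Φ) = D.C0.conj (t_obj f) (t_obj g).symm (F0.map (C.t.map Φ))
  i_obj : ∀ a : C.C0.Obj, F1.obj (C.i.obj a) = D.i.obj (F0.obj a)
  i_map : ∀ {a b : C.C0.Obj} (u : C.C0.Hom a b),
    F1.map (C.i.map u) = D.C1.conj (i_obj a) (i_obj b).symm (D.i.map (F0.map u))
  hObj_comm : ∀ (f g : C.C1.Obj) (w : C.t.obj f = C.s.obj g),
    F1.obj (C.hObj f g w) =
      D.hObj (F1.obj f) (F1.obj g)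
        ((t_obj f).trans ((congrArg F0.obj w).trans (s_obj g).symm))
  hMap_comm : ∀ {f f' g g' : C.C1.Obj} (w : C.t.obj f = C.s.obj g)
    (w' : C.t.obj f' = C.s.obj g') (Φ : C.C1.Hom f f') (Ψ : C.C1.Hom g g')
    (pf : _) (pf' : _),
    F1.map (C.hMap w w' Φ Ψ pf) =
      D.C1.conj (hObj_comm f g w) (hObj_comm f' g' w').symm
        (D.hMap _ _ (F1.map Φ) (F1.map Ψ) pf')
  lunit_comm : ∀ f : C.C1.Obj, HEq (F1.map (C.lunit f)) (D.lunit (F1.obj f))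
  runit_comm : ∀ f : C.C1.Obj, HEq (F1.map (C.runit f)) (D.runit (F1.obj f))
  assoc_comm : ∀ {f g h : C.C1.Obj} (w1 : C.t.obj f = C.s.obj g)
    (w2 : C.t.obj g = C.s.obj h),
    HEq (F1.map (C.assocC w1 w2))
      (D.assocC ((t_obj f).trans ((congrArg F0.obj w1).trans (s_obj g).symm))
        ((t_obj g).trans ((congrArg F0.obj w2).trans (s_obj h).symm)))

/-- Two double functors have equal decorated horizontalizations `H*G = H*G'` iff they
have the same object functor (= same action on the decoration), the same action on
horizontal morphisms, and the same action on globular 2-morphisms. -/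
def SameDecH {C C' : DblCat.{u}} (G G' : DblFctr C C') : Prop :=
  G.F0 = G'.F0 ∧ (∀ f : C.C1.Obj, G.F1.obj f = G'.F1.obj f) ∧
    (∀ {f g : C.C1.Obj} (Φ : C.C1.Hom f g), C.Globular Φ → HEq (G.F1.map Φ) (G'.F1.map Φ))


/-! Auxiliary lemmas for stmt3. -/

theorem CatData.conj_heq (C : CatData.{u}) {a a' b b' : C.Obj} (h1 : a' = a) (h2 : b = b')
    (f : C.Hom a b) : HEq (C.conj h1 h2 f) f := by
  subst h1; subst h2; rw [CatData.conj_rfl]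

theorem CatData.heq_id (C : CatData.{u}) {a a' : C.Obj} (h : a = a') :
    HEq (C.id a) (C.id a') := by subst h; rfl

theorem CatData.heq_comp (C : CatData.{u}) {a b c a' b' c' : C.Obj}
    (ha : a = a') (hb : b = b') (hc : c = c')
    {f : C.Hom a b} {f' : C.Hom a' b'} {g : C.Hom b c} {g' : C.Hom b' c'}
    (hf : HEq f f') (hg : HEq g g') : HEq (C.comp f g) (C.comp f' g') := by
  subst ha; subst hb; subst hc; cases hf; cases hg; rfl

theorem heq_hMap (D : DblCat.{u}) {f₁ f₁' g₁ g₁' f₂ f₂' g₂ g₂' : D.C1.Obj}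
    (ef : f₁ = f₂) (ef' : f₁' = f₂') (eg : g₁ = g₂) (eg' : g₁' = g₂')
    {w₁ : D.t.obj f₁ = D.s.obj g₁} {w₁' : D.t.obj f₁' = D.s.obj g₁'}
    {w₂ : D.t.obj f₂ = D.s.obj g₂} {w₂' : D.t.obj f₂' = D.s.obj g₂'}
    {Φ₁ : D.C1.Hom f₁ f₁'} {Ψ₁ : D.C1.Hom g₁ g₁'}
    {Φ₂ : D.C1.Hom f₂ f₂'} {Ψ₂ : D.C1.Hom g₂ g₂'}
    {pf₁ : D.C0.comp (D.t.map Φ₁) (D.C0.eqHom w₁') = D.C0.comp (D.C0.eqHom w₁) (D.s.map Ψ₁)}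
    {pf₂ : D.C0.comp (D.t.map Φ₂) (D.C0.eqHom w₂') = D.C0.comp (D.C0.eqHom w₂) (D.s.map Ψ₂)}
    (hΦ : HEq Φ₁ Φ₂) (hΨ : HEq Ψ₁ Ψ₂) :
    HEq (D.hMap w₁ w₁' Φ₁ Ψ₁ pf₁) (D.hMap w₂ w₂' Φ₂ Ψ₂ pf₂) := by
  subst ef; subst ef'; subst eg; subst eg'
  cases hΦ; cases hΨ; rfl

theorem CatData.conj_comm (D : CatData.{u}) {a b c d a' b' c' d' : D.Obj}
    (e1 : a = b) (e2 : a' = b') (e3 : d = c) (e4 : d' = c')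
    (p : b = c) (p' : b' = c') {X : D.Hom b b'} {Y : D.Hom c c'}
    (key : D.comp X (D.eqHom p') = D.comp (D.eqHom p) Y) :
    D.comp (D.conj e1 e2.symm X) (D.eqHom (e2.trans (p'.trans e4.symm))) =
      D.comp (D.eqHom (e1.trans (p.trans e3.symm))) (D.conj e3 e4.symm Y) := by
  subst e1; subst e2; subst e3; subst e4
  show D.comp (D.conj rfl rfl X) (D.eqHom p') = D.comp (D.eqHom p) (D.conj rfl rfl Y)
  rw [D.conj_rfl, D.conj_rfl]; exact key

theorem DblFctr.hpf {C C' : DblCat.{u}} (G : DblFctr C C') {f f' g g' : C.C1.Obj}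
    (w : C.t.obj f = C.s.obj g) (w' : C.t.obj f' = C.s.obj g')
    (Φ : C.C1.Hom f f') (Ψ : C.C1.Hom g g')
    (pf : C.C0.comp (C.t.map Φ) (C.C0.eqHom w') = C.C0.comp (C.C0.eqHom w) (C.s.map Ψ)) :
    C'.C0.comp (C'.t.map (G.F1.map Φ))
        (C'.C0.eqHom ((G.t_obj f').trans ((congrArg G.F0.obj w').trans (G.s_obj g').symm))) =
      C'.C0.comp
        (C'.C0.eqHom ((G.t_obj f).trans ((congrArg G.F0.obj w).trans (G.s_obj g).symm)))
        (C'.s.map (G.F1.map Ψ)) := by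
  have key : C'.C0.comp (G.F0.map (C.t.map Φ)) (C'.C0.eqHom (congrArg G.F0.obj w')) =
      C'.C0.comp (C'.C0.eqHom (congrArg G.F0.obj w)) (G.F0.map (C.s.map Ψ)) := by
    rw [← G.F0.map_eqHom w', ← G.F0.map_eqHom w, ← G.F0.map_comp, ← G.F0.map_comp, pf]
  rw [G.t_map, G.s_map]
  exact C'.C0.conj_comm (G.t_obj f) (G.t_obj f') (G.s_obj g) (G.s_obj g') _ _ key

/-- if two double functors `G, G'` between globularily generated double
categories have equal decorated horizontalizations, then for every positive integer
`k` their `k`-th horizontal functions agree (they agree on `H_k`) and their `k`-th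
vertical functors agree (they agree on `V_k`; equality of the vertical functors also
includes equality of their object functions, i.e. of the actions on horizontal
morphisms, which is part of the hypothesis). -/
theorem stmt3 (C C' : DblCat.{u}) (hC : C.GloballyGenerated) (hC' : C'.GloballyGenerated)
    (G G' : DblFctr C C') (h : SameDecH G G') (k : ℕ) :
    (∀ {f g : C.C1.Obj} (Φ : C.C1.Hom f g), C.Hfil k Φ → HEq (G.F1.map Φ) (G'.F1.map Φ)) ∧
    (∀ {f g : C.C1.Obj} (Φ : C.C1.Hom f g), C.Vfil k Φ → HEq (G.F1.map Φ) (G'.F1.map Φ)) := by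
  obtain ⟨h0, hobj, hglob⟩ := h
  have catAg : ∀ (S : ∀ ⦃f g : C.C1.Obj⦄, C.C1.Hom f g → Prop),
      (∀ {f g : C.C1.Obj} (Φ : C.C1.Hom f g), S Φ → HEq (G.F1.map Φ) (G'.F1.map Φ)) →
      ∀ {f g : C.C1.Obj} (Φ : C.C1.Hom f g), catClos C.C1 S Φ →
        HEq (G.F1.map Φ) (G'.F1.map Φ) := by
    intro S hS f g Φ hΦ
    induction hΦ with
    | base hb => exact hS _ hb
    | id a =>
      rw [G.F1.map_id, G'.F1.map_id]
      exact C'.C1.heq_id (hobj a)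
    | comp h1 h2 ih1 ih2 =>
      rw [G.F1.map_comp, G'.F1.map_comp]
      exact C'.C1.heq_comp (hobj _) (hobj _) (hobj _) ih1 ih2
  have key : ∀ (k : ℕ) {f g : C.C1.Obj} (Φ : C.C1.Hom f g), C.Hfil k Φ →
      HEq (G.F1.map Φ) (G'.F1.map Φ) := by
    intro k
    induction k with
    | zero =>
      intro f g Φ hΦ
      rcases hΦ with hg | ⟨a, b, u, rfl, rfl, hΦ⟩
      · exact hglob Φ hg
      · have hΦ' : Φ = C.i.map u := eq_of_heq hΦ
        subst hΦ'
        rw [G.i_map u, G'.i_map u]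
        have hmap : HEq (C'.i.map (G.F0.map u)) (C'.i.map (G'.F0.map u)) := by rw [h0]
        exact ((C'.C1.conj_heq _ _ _).trans hmap).trans (HEq.symm (C'.C1.conj_heq _ _ _))
    | succ k ih =>
      intro f g Φ hΦ
      have hΦ' : horClos C (catClos C.C1 (C.Hfil k)) Φ := hΦ
      clear hΦ
      induction hΦ' with
      | base hb => exact catAg _ (fun Ψ hΨ => ih Ψ hΨ) _ hb
      | hcomp w w' Φ Ψ pf hΦ hΨ ihΦ ihΨ =>
        rw [G.hMap_comm w w' Φ Ψ pf (G.hpf w w' Φ Ψ pf),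
          G'.hMap_comm w w' Φ Ψ pf (G'.hpf w w' Φ Ψ pf)]
        refine HEq.trans (C'.C1.conj_heq _ _ _)
          (HEq.trans ?_ (HEq.symm (C'.C1.conj_heq _ _ _)))
        refine heq_hMap C' (hobj _) (hobj _) (hobj _) (hobj _) ?_ ?_
        · exact ihΦ
        · exact ihΨ
  exact ⟨fun Φ hΦ => key k Φ hΦ, fun Φ hΦ => catAg _ (fun Ψ hΨ => key k Ψ hΨ) Φ hΦ⟩
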